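/- Let k be a field and f ∈ k[x] a nonzero polynomial. If every monic irreducible factor of f (over k) is separable, then tol(f) is a nonzero element of k (i.e., the element tol(f) of the algebraic closure lies in the image of k and is nonzero). -/

import Mathlib

open Polynomial
open scoped Classical

/-- The tolerant of a polynomial `f` over a field `K` (intended: `K` an algebraic closure and
`f` the image of a polynomial over a subfield): writing `f = a_n ∏ (X - r_i)^{m_i}` with
`r_1, …, r_s` distinct, `tol f = a_n^{2n-2} ∏_{i<j} (r_i - r_j)^{2 m_i m_j}`.  The product is
taken over unordered pairs of distinct roots; this is well defined since the exponents are even. -/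
noncomputable def tol {K : Type*} [Field K] (f : K[X]) : K :=
  f.leadingCoeff ^ (2 * (f.natDegree : ℤ) - 2) *
    ∏ p ∈ f.roots.toFinset.sym2.filter (fun p => ¬ p.IsDiag),
      Sym2.lift ⟨fun a b => ((a - b) ^ 2) ^ (f.rootMultiplicity a * f.rootMultiplicity b),
        fun a b => by
          dsimp only
          rw [mul_comm (rootMultiplicity a f), show (a - b) ^ 2 = (b - a) ^ 2 by ring]⟩ p

/-- A separable element of the algebraic closure fixed by all automorphisms lies in the
base field. -/
theorem tol_aux_fixed_sep_mem_range {k : Type*} [Field k] (x : AlgebraicClosure k)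
    (hsep : IsSeparable k x) (hfix : ∀ σ : AlgebraicClosure k ≃ₐ[k] AlgebraicClosure k, σ x = x) :
    x ∈ (algebraMap k (AlgebraicClosure k)).range := by
  have hint : IsIntegral k x := Algebra.IsIntegral.isIntegral x
  rw [← minpoly.degree_eq_one_iff]
  have hsplits : ((minpoly k x).map (algebraMap k (AlgebraicClosure k))).Splits :=
    IsAlgClosed.splits _
  have hne : minpoly k x ≠ 0 := minpoly.ne_zero hint
  have hmap : (minpoly k x).map (algebraMap k (AlgebraicClosure k)) ≠ 0 := by
    simpa using hne
  have hall : ∀ y ∈ ((minpoly k x).map (algebraMap k (AlgebraicClosure k))).roots, y = x := by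
    intro y hy
    have h0 : aeval y (minpoly k x) = 0 := by
      have := (mem_roots hmap).1 hy
      rwa [IsRoot, eval_map, ← aeval_def] at this
    obtain ⟨σ, hσ⟩ := minpoly.exists_algEquiv_of_root' (Algebra.IsAlgebraic.isAlgebraic x) h0
    rw [← hσ, hfix σ]
  have hnodup : ((minpoly k x).map (algebraMap k (AlgebraicClosure k))).roots.Nodup :=
    nodup_roots (Separable.map hsep)
  have hxmem : x ∈ ((minpoly k x).map (algebraMap k (AlgebraicClosure k))).roots := by
    rw [mem_roots hmap, IsRoot, eval_map, ← aeval_def, minpoly.aeval]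
  have hroots : ((minpoly k x).map (algebraMap k (AlgebraicClosure k))).roots = {x} := by
    refine le_antisymm ((Multiset.le_iff_subset hnodup).2 ?_) (Multiset.singleton_le.2 hxmem)
    intro y hy
    simp [hall y hy]
  have hdeg : (minpoly k x).natDegree = 1 := by
    rw [← natDegree_map (algebraMap k (AlgebraicClosure k)), hsplits.natDegree_eq_card_roots, hroots]; rfl
  rw [degree_eq_natDegree hne, hdeg]; rfl

/-- `tol` of the image of `f` in the algebraic closure is fixed by all automorphisms. -/
theorem tol_aux_map_aut {k : Type*} [Field k] (f : k[X])
    (σ : AlgebraicClosure k ≃ₐ[k] AlgebraicClosure k) :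
    σ (tol (f.map (algebraMap k (AlgebraicClosure k)))) =
      tol (f.map (algebraMap k (AlgebraicClosure k))) := by
  set F := f.map (algebraMap k (AlgebraicClosure k)) with hFdef
  have hFσ : F.map (σ : AlgebraicClosure k →+* AlgebraicClosure k) = F := by
    rw [hFdef, map_map]
    congr 1
    ext a
    simp
  have hroots : F.roots.map σ = F.roots := by
    conv_rhs => rw [← hFσ]
    rw [(IsAlgClosed.splits F).roots_map _]
    rfl
  have hmult : ∀ a, rootMultiplicity (σ a) F = rootMultiplicity a F := by
    intro a
    rw [← count_roots, ← count_roots]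
    conv_lhs => rw [← hroots]
    rw [Multiset.count_map_eq_count' _ _ σ.injective]
  have hlc : σ F.leadingCoeff = F.leadingCoeff := by
    rw [hFdef, leadingCoeff_map]
    exact σ.commutes _
  have hS : F.roots.toFinset.image σ = F.roots.toFinset := by
    rw [← Multiset.toFinset_map, hroots]
  have hSmem : ∀ a ∈ F.roots.toFinset, σ a ∈ F.roots.toFinset := by
    intro a ha
    rw [← hS]
    exact Finset.mem_image_of_mem _ ha
  have hSmem' : ∀ a ∈ F.roots.toFinset, σ.symm a ∈ F.roots.toFinset := by
    intro a ha
    rw [← hS] at ha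
    obtain ⟨b, hb, rfl⟩ := Finset.mem_image.1 ha
    simpa using hb
  rw [tol, map_mul, map_zpow₀, map_prod, hlc]
  congr 1
  refine Finset.prod_nbij' (fun p => p.map σ) (fun p => p.map σ.symm) ?_ ?_ ?_ ?_ ?_
  · intro p hp
    induction p with
    | _ a b =>
      rw [Finset.mem_filter, Finset.mk_mem_sym2_iff, Sym2.isDiag_iff_proj_eq] at hp
      simp only [Sym2.map_pair_eq, Finset.mem_filter, Finset.mk_mem_sym2_iff,
        Sym2.isDiag_iff_proj_eq]
      exact ⟨⟨hSmem a hp.1.1, hSmem b hp.1.2⟩, fun h => hp.2 (σ.injective h)⟩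
  · intro p hp
    induction p with
    | _ a b =>
      rw [Finset.mem_filter, Finset.mk_mem_sym2_iff, Sym2.isDiag_iff_proj_eq] at hp
      simp only [Sym2.map_pair_eq, Finset.mem_filter, Finset.mk_mem_sym2_iff,
        Sym2.isDiag_iff_proj_eq]
      exact ⟨⟨hSmem' a hp.1.1, hSmem' b hp.1.2⟩, fun h => hp.2 (σ.symm.injective h)⟩
  · intro p _
    induction p with
    | _ a b => simp [Sym2.map_pair_eq]
  · intro p _
    induction p with
    | _ a b => simp [Sym2.map_pair_eq]
  · intro p _
    induction p with
    | _ a b =>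
      simp only [Sym2.map_pair_eq, Sym2.lift_mk, map_pow, map_sub, hmult]

/-- If the monic irreducible factors of `f` are separable, then `tol` of the image of `f`
is separable over the base field. -/
theorem tol_aux_sep {k : Type*} [Field k] (f : k[X]) (hf : f ≠ 0)
    (hsep : ∀ g : k[X], g.Monic → Irreducible g → g ∣ f → g.Separable) :
    IsSeparable k (tol (f.map (algebraMap k (AlgebraicClosure k)))) := by
  set F := f.map (algebraMap k (AlgebraicClosure k)) with hFdef
  have hroot : ∀ r ∈ F.roots.toFinset, r ∈ separableClosure k (AlgebraicClosure k) := by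
    intro r hr
    rw [Multiset.mem_toFinset, mem_roots (by simpa [hFdef] using hf), IsRoot, hFdef,
      eval_map, ← aeval_def] at hr
    have halg : IsAlgebraic k r := ⟨f, hf, hr⟩
    have hint : IsIntegral k r := halg.isIntegral
    rw [mem_separableClosure_iff]
    exact hsep _ (minpoly.monic hint) (minpoly.irreducible hint) (minpoly.dvd _ _ hr)
  rw [← mem_separableClosure_iff, tol]
  refine mul_mem (IntermediateField.pow_mem _ ?_ _) (prod_mem ?_)
  · rw [hFdef, leadingCoeff_map]
    exact IntermediateField.algebraMap_mem _ _
  · intro p hp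
    induction p with
    | _ a b =>
      rw [Finset.mem_filter, Finset.mk_mem_sym2_iff] at hp
      rw [Sym2.lift_mk]
      exact pow_mem (pow_mem (sub_mem (hroot a hp.1.1) (hroot b hp.1.2)) _) _

/-- `tol` of the image of a nonzero polynomial is nonzero. -/
theorem tol_aux_ne_zero {k : Type*} [Field k] (f : k[X]) (hf : f ≠ 0) :
    tol (f.map (algebraMap k (AlgebraicClosure k))) ≠ 0 := by
  set F := f.map (algebraMap k (AlgebraicClosure k)) with hFdef
  have hF : F ≠ 0 := by simpa [hFdef] using hf
  rw [tol]
  refine mul_ne_zero (zpow_ne_zero _ (leadingCoeff_ne_zero.2 hF)) ?_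
  rw [Finset.prod_ne_zero_iff]
  intro p hp
  induction p with
  | _ a b =>
    rw [Finset.mem_filter, Sym2.isDiag_iff_proj_eq] at hp
    rw [Sym2.lift_mk]
    exact pow_ne_zero _ (pow_ne_zero _ (sub_ne_zero.2 hp.2))

/-- If every monic irreducible factor of the nonzero polynomial `f ∈ k[x]` is separable, then
`tol f` is (the image in the algebraic closure of) a nonzero element of `k`. -/
theorem tol_rational_of_separable_factors {k : Type*} [Field k] (f : k[X]) (hf : f ≠ 0)
    (hsep : ∀ g : k[X], g.Monic → Irreducible g → g ∣ f → g.Separable) :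
    ∃ c : k, c ≠ 0 ∧
      algebraMap k (AlgebraicClosure k) c = tol (f.map (algebraMap k (AlgebraicClosure k))) := by
  obtain ⟨c, hc⟩ := tol_aux_fixed_sep_mem_range _ (tol_aux_sep f hf hsep)
    (fun σ => tol_aux_map_aut f σ)
  refine ⟨c, fun h => tol_aux_ne_zero f hf ?_, hc⟩
  rw [← hc, h, map_zero]
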